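/- If n is an integer exceeding 1, then the smallest prime not dividing n divides n^(n^n) - 1. -/

import Mathlib

theorem smallest_prime_not_dividing_divides (n : ℕ) (hn : 1 < n) :
    sInf {p : ℕ | p.Prime ∧ ¬ p ∣ n} ∣ n ^ (n ^ n) - 1 := by
  set S : Set ℕ := {p : ℕ | p.Prime ∧ ¬ p ∣ n} with hS
  -- the minimal prime factor of n+1 is in S
  have hqmem : (n+1).minFac ∈ S := by
    refine ⟨Nat.minFac_prime (by omega), fun hdvd => ?_⟩
    have h2 : (n+1).minFac ∣ (n+1) - n := Nat.dvd_sub (Nat.minFac_dvd (n+1)) hdvd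
    have h3 : (n+1) - n = 1 := by omega
    rw [h3] at h2
    have := Nat.le_of_dvd one_pos h2
    have := (Nat.minFac_prime (show n+1 ≠ 1 by omega)).two_le
    omega
  have hne : S.Nonempty := ⟨_, hqmem⟩
  have hpmem : sInf S ∈ S := Nat.sInf_mem hne
  set p := sInf S with hp
  obtain ⟨hpp, hpnd⟩ := hpmem
  have hple : p ≤ n + 1 := le_trans (Nat.sInf_le hqmem) (Nat.minFac_le (by omega))
  -- every prime q < p divides n
  have hsmall : ∀ q : ℕ, q.Prime → q < p → q ∣ n := by
    intro q hq hqlt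
    by_contra h
    exact absurd (Nat.sInf_le (show q ∈ S from ⟨hq, h⟩)) (Nat.not_le.mpr hqlt)
  -- p - 1 dividies n ^ n
  have hdvd : (p - 1) ∣ n ^ n := by
    have hp1pos : 0 < p - 1 := by have := hpp.two_le; omega
    have hnn : (n : ℕ) ^ n ≠ 0 := by positivity
    rw [← Nat.factorization_le_iff_dvd (by omega) hnn]
    intro q
    rcases Nat.eq_zero_or_pos ((p-1).factorization q) with h0 | hpos
    · simp [h0]
    · have hq : q.Prime := Nat.prime_of_mem_primeFactors
        (by rw [← Nat.support_factorization]; exact Finsupp.mem_support_iff.mpr hpos.ne')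
      have hqd : q ∣ p - 1 := Nat.dvd_of_factorization_pos hpos.ne'
      have hqlt : q < p := by
        have := Nat.le_of_dvd hp1pos hqd
        omega
      have hqn : q ∣ n := hsmall q hq hqlt
      -- exponent bound: q ^ k ≤ p - 1 ≤ n, and k < 2^k ≤ q^k
      set k := (p-1).factorization q with hk
      have hpow : q ^ k ∣ p - 1 := Nat.ordProj_dvd _ _
      have hle : q ^ k ≤ p - 1 := Nat.le_of_dvd hp1pos hpow
      have h2k : 2 ^ k ≤ q ^ k := Nat.pow_le_pow_left hq.two_le k
      have hkn : k ≤ n := by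
        have := Nat.lt_two_pow_self (n := k)
        omega
      have : (n ^ n).factorization q = n * n.factorization q := by
        simp [Nat.factorization_pow]
      rw [this]
      have h1 : 1 ≤ n.factorization q :=
        (Nat.Prime.factorization_pos_of_dvd hq (by omega) hqn)
      calc k ≤ n := hkn
        _ = n * 1 := (mul_one n).symm
        _ ≤ n * n.factorization q := Nat.mul_le_mul_left n h1
  -- Euler/Fermat
  have hcop : n.Coprime p := (Nat.coprime_comm.mp ((Nat.Prime.coprime_iff_not_dvd hpp).mpr hpnd))
  have heuler : n ^ (p - 1) ≡ 1 [MOD p] := by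
    have := Nat.ModEq.pow_totient hcop
    rwa [Nat.totient_prime hpp] at this
  obtain ⟨c, hc⟩ := hdvd
  have hmod : n ^ (n ^ n) ≡ 1 [MOD p] := by
    calc n ^ (n ^ n) = (n ^ (p-1)) ^ c := by rw [← pow_mul, ← hc]
      _ ≡ 1 ^ c [MOD p] := heuler.pow c
      _ = 1 := one_pow c
  have h1le : 1 ≤ n ^ (n ^ n) := Nat.one_le_pow _ _ (by omega)
  exact (Nat.modEq_iff_dvd' h1le).mp hmod.symm
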